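/- arXiv:2510.06082 — 2 statements merged into one kernel-verified Lean document; each statement's English description precedes it below -/
import Mathlib

section
/- Let q be a prime power and let V be a 2ν-dimensional vector space over 𝔽_q equipped with a non-degenerate alternating bilinear form. For 0 ≤ k ≤ ν, the number of k-dimensional totally isotropic subspaces of V equals ∏_{i=0}^{k−1} (q^{2(ν−i)} − 1)/(q^{i+1} − 1). -/
open Module Submodule Set Finset

section Aux

variable {F V : Type*} [Field F] [AddCommGroup V] [Module F V]

lemma aux_mem_orth_range (B : LinearMap.BilinForm F V) {k : ℕ} (s : Fin k → V) (x : V) :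
    x ∈ LinearMap.BilinForm.orthogonal B (span F (Set.range s)) ↔ ∀ i, B (s i) x = 0 := by
  constructor
  · intro h i
    exact h (s i) (subset_span (mem_range_self i))
  · intro h n hn
    have hle : span F (Set.range s) ≤ LinearMap.ker (B.flip x) := by
      rw [span_le]
      rintro _ ⟨i, rfl⟩
      simpa using h i
    simpa [LinearMap.BilinForm.IsOrtho] using hle hn

lemma aux_span_isotropic (B : LinearMap.BilinForm F V) {k : ℕ} {s : Fin k → V}
    (h : ∀ i j, B (s i) (s j) = 0) :
    ∀ w ∈ span F (Set.range s), ∀ w' ∈ span F (Set.range s), B w w' = 0 := by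
  intro w hw w' hw'
  have hw'o : w' ∈ LinearMap.BilinForm.orthogonal B (span F (Set.range s)) := by
    rw [aux_mem_orth_range]
    intro i
    have hle : span F (Set.range s) ≤ LinearMap.ker (B (s i)) := by
      rw [span_le]
      rintro _ ⟨j, rfl⟩
      simpa using h i j
    simpa using hle hw'
  exact hw'o w hw

lemma aux_cons_isotropic (B : LinearMap.BilinForm F V) (halt : ∀ v, B v v = 0)
    {k : ℕ} {s : Fin k → V} (hiso : ∀ i j, B (s i) (s j) = 0) {v : V}
    (hv : ∀ i, B (s i) v = 0) :
    ∀ i j, B ((Fin.cons v s : Fin (k+1) → V) i) ((Fin.cons v s : Fin (k+1) → V) j) = 0 := by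
  intro i j
  refine Fin.cases ?_ (fun i' => ?_) i <;> refine Fin.cases ?_ (fun j' => ?_) j
  · simpa using halt v
  · have h2 : -B v (s j') = B (s j') v := LinearMap.IsAlt.neg halt _ _
    simp only [Fin.cons_zero, Fin.cons_succ]
    rw [← neg_eq_zero, h2]
    exact hv j'
  · simpa using hv i'
  · simpa using hiso i' j'

/-- Isotropic linearly independent tuples. -/
def IsoTup (B : LinearMap.BilinForm F V) (k : ℕ) :=
  {s : Fin k → V // LinearIndependent F s ∧ ∀ i j, B (s i) (s j) = 0}

/-- Isotropic subspaces of dimension `k`. -/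
def IsoSub (B : LinearMap.BilinForm F V) (k : ℕ) :=
  {W : Submodule F V // Module.finrank F W = k ∧ ∀ w ∈ W, ∀ w' ∈ W, B w w' = 0}

def tupTail (B : LinearMap.BilinForm F V) {k : ℕ} (t : IsoTup B (k + 1)) : IsoTup B k :=
  ⟨Fin.tail t.1, (linearIndependent_fin_succ.mp t.2.1).1, fun i j => t.2.2 i.succ j.succ⟩

def tupSpan (B : LinearMap.BilinForm F V) [Nontrivial F] {k : ℕ} (t : IsoTup B k) :
    IsoSub B k :=
  ⟨span F (Set.range t.1),
    by rw [finrank_span_eq_card t.2.1, Fintype.card_fin],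
    aux_span_isotropic B t.2.2⟩

/-- Fibers of `tupTail` are the admissible extensions. -/
def tailFiberEquiv (B : LinearMap.BilinForm F V) (halt : ∀ v, B v v = 0) {k : ℕ}
    (s : IsoTup B k) :
    {t : IsoTup B (k + 1) // tupTail B t = s} ≃
      {v : V // v ∈ LinearMap.BilinForm.orthogonal B (span F (Set.range s.1)) ∧
        v ∉ span F (Set.range s.1)} where
  toFun t := ⟨t.1.1 0, by
    have hts : Fin.tail t.1.1 = s.1 := congrArg Subtype.val t.2
    constructor
    · rw [aux_mem_orth_range]
      intro i
      have h := t.1.2.2 i.succ 0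
      rwa [show t.1.1 i.succ = s.1 i from congrFun hts i] at h
    · have h := (linearIndependent_fin_succ.mp t.1.2.1).2
      rwa [hts] at h⟩
  invFun v := ⟨⟨(Fin.cons v.1 s.1 : Fin (k+1) → V),
      linearIndependent_fin_cons.mpr ⟨s.2.1, v.2.2⟩,
      aux_cons_isotropic B halt s.2.2 ((aux_mem_orth_range B s.1 v.1).mp v.2.1)⟩,
    by
      apply Subtype.ext
      show Fin.tail (Fin.cons v.1 s.1 : Fin (k+1) → V) = s.1
      exact Fin.tail_cons _ _⟩
  left_inv := by
    rintro ⟨t, ht⟩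
    have hts : Fin.tail t.1 = s.1 := congrArg Subtype.val ht
    apply Subtype.ext
    apply Subtype.ext
    show Fin.cons (t.1 0) s.1 = t.1
    rw [← hts]
    exact Fin.cons_self_tail t.1
  right_inv := by
    rintro ⟨v, hv⟩
    apply Subtype.ext
    show (Fin.cons v s.1 : Fin (k+1) → V) 0 = v
    exact Fin.cons_zero _ _

/-- Fibers of `tupSpan` are bases of the subspace. -/
def spanFiberEquiv (B : LinearMap.BilinForm F V) [Nontrivial F] [FiniteDimensional F V]
    {k : ℕ} (W : IsoSub B k) :
    {t : IsoTup B k // tupSpan B t = W} ≃ {u : Fin k → W.1 // LinearIndependent F u} where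
  toFun t := ⟨fun i => ⟨t.1.1 i, by
      have hspan : span F (Set.range t.1.1) = W.1 := congrArg Subtype.val t.2
      rw [← hspan]
      exact subset_span (mem_range_self i)⟩,
    LinearIndependent.of_comp W.1.subtype t.1.2.1⟩
  invFun u := ⟨⟨fun i => (u.1 i : V),
      u.2.map' W.1.subtype (Submodule.ker_subtype W.1),
      fun i j => W.2.2 _ (u.1 i).2 _ (u.1 j).2⟩,
    by
      apply Subtype.ext
      show span F (Set.range fun i => ((u.1 i : V))) = W.1
      have hle : span F (Set.range fun i => ((u.1 i : V))) ≤ W.1 := by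
        rw [span_le]
        rintro _ ⟨i, rfl⟩
        exact (u.1 i).2
      refine Submodule.eq_of_le_of_finrank_le hle ?_
      have hli : LinearIndependent F fun i => ((u.1 i : V)) :=
        u.2.map' W.1.subtype (Submodule.ker_subtype W.1)
      rw [finrank_span_eq_card hli, Fintype.card_fin, W.2.1]⟩
  left_inv := by
    rintro ⟨t, ht⟩
    apply Subtype.ext
    apply Subtype.ext
    rfl
  right_inv := by
    rintro ⟨u, hu⟩
    apply Subtype.ext
    funext i
    apply Subtype.ext
    rfl

end Aux

section Count

variable {F V : Type*} [Field F] [Fintype F] [AddCommGroup V] [Module F V]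
  [FiniteDimensional F V]

lemma aux_finite_isoTup (B : LinearMap.BilinForm F V) (k : ℕ) : Finite (IsoTup B k) := by
  have : Finite V := Module.finite_of_finite F
  unfold IsoTup
  infer_instance

lemma aux_finite_isoSub (B : LinearMap.BilinForm F V) (k : ℕ) : Finite (IsoSub B k) := by
  have : Finite V := Module.finite_of_finite F
  have : Finite (Submodule F V) :=
    Finite.of_injective (fun W : Submodule F V => (W : Set V)) SetLike.coe_injective
  unfold IsoSub
  exact Subtype.finite

lemma aux_card_submodule (W : Submodule F V) :
    Nat.card W = Fintype.card F ^ Module.finrank F W := by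
  have : Finite V := Module.finite_of_finite F
  have : Fintype W := Fintype.ofFinite W
  rw [Nat.card_eq_fintype_card]
  exact card_eq_pow_finrank

/-- Cardinality of the set of admissible extensions of an isotropic independent tuple. -/
lemma aux_card_ext (B : LinearMap.BilinForm F V)
    (halt : ∀ v, B v v = 0) (hnd : ∀ v, (∀ w, B v w = 0) → v = 0)
    {k : ℕ} (s : Fin k → V) (hs : LinearIndependent F s)
    (hiso : ∀ i j, B (s i) (s j) = 0) :
    Nat.card {v : V // v ∈ LinearMap.BilinForm.orthogonal B (span F (Set.range s)) ∧
        v ∉ span F (Set.range s)} =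
      Fintype.card F ^ (Module.finrank F V - k) - Fintype.card F ^ k := by
  have : Finite V := Module.finite_of_finite F
  set W := span F (Set.range s) with hW
  set O := LinearMap.BilinForm.orthogonal B W with hO
  have hWO : (W : Set V) ⊆ (O : Set V) := by
    intro w hw
    rw [SetLike.mem_coe, hO, hW, aux_mem_orth_range]
    intro i
    have hle : W ≤ LinearMap.ker (B (s i)) := by
      rw [hW, span_le]
      rintro _ ⟨j, rfl⟩
      simpa using hiso i j
    simpa using hle hw
  have hWk : Module.finrank F W = k := by
    rw [hW, finrank_span_eq_card hs, Fintype.card_fin]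
  have hOk : Module.finrank F O = Module.finrank F V - k := by
    rw [hO, LinearMap.BilinForm.finrank_orthogonal
      ((LinearMap.IsAlt.isRefl halt).nondegenerate_iff_separatingLeft.mpr hnd), hWk]
  have e : {v : V // v ∈ O ∧ v ∉ W} ≃ ((O : Set V) \ (W : Set V) : Set V) :=
    Equiv.subtypeEquivRight (fun v => by simp [Set.mem_diff])
  rw [Nat.card_congr e, Nat.card_coe_set_eq, Set.ncard_diff hWO,
    ← Nat.card_coe_set_eq, ← Nat.card_coe_set_eq]
  rw [show Nat.card (O : Set V) = Nat.card O from rfl,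
    show Nat.card (W : Set V) = Nat.card W from rfl,
    aux_card_submodule, aux_card_submodule, hWk, hOk]

/-- The number of isotropic linearly independent `k`-tuples. -/
lemma aux_card_isoTup (B : LinearMap.BilinForm F V)
    (halt : ∀ v, B v v = 0) (hnd : ∀ v, (∀ w, B v w = 0) → v = 0) (k : ℕ) :
    Nat.card (IsoTup B k) =
      ∏ i ∈ Finset.range k,
        (Fintype.card F ^ (Module.finrank F V - i) - Fintype.card F ^ i) := by
  have : Finite V := Module.finite_of_finite F
  induction k with
  | zero =>
    have hu : ∀ t : IsoTup B 0,
        t = ⟨Fin.elim0, linearIndependent_empty_type, fun i => i.elim0⟩ := by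
      rintro ⟨t, ht⟩
      apply Subtype.ext
      funext i
      exact i.elim0
    haveI : Unique (IsoTup B 0) :=
      ⟨⟨⟨Fin.elim0, linearIndependent_empty_type, fun i => i.elim0⟩⟩, hu⟩
    rw [Nat.card_unique, Finset.range_zero, Finset.prod_empty]
  | succ k ih =>
    have e := (Equiv.sigmaFiberEquiv (tupTail B (k := k))).symm
    rw [Nat.card_congr e]
    haveI := aux_finite_isoTup B k
    haveI := aux_finite_isoTup B (k + 1)
    haveI : Fintype (IsoTup B k) := Fintype.ofFinite _
    haveI : ∀ s : IsoTup B k, Fintype {t : IsoTup B (k + 1) // tupTail B t = s} :=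
      fun s => Fintype.ofFinite _
    rw [Nat.card_eq_fintype_card, Fintype.card_sigma]
    have hconst : ∀ s : IsoTup B k, Fintype.card {t : IsoTup B (k + 1) // tupTail B t = s} =
        Fintype.card F ^ (Module.finrank F V - k) - Fintype.card F ^ k := by
      intro s
      rw [← Nat.card_eq_fintype_card, Nat.card_congr (tailFiberEquiv B halt s)]
      exact aux_card_ext B halt hnd s.1 s.2.1 s.2.2
    rw [Finset.sum_congr rfl (fun s _ => hconst s), Finset.sum_const, Finset.card_univ,
      smul_eq_mul, ← Nat.card_eq_fintype_card, ih, Finset.prod_range_succ]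

/-- Relating isotropic subspaces to isotropic tuples. -/
lemma aux_card_isoSub_mul (B : LinearMap.BilinForm F V)
    (halt : ∀ v, B v v = 0) (hnd : ∀ v, (∀ w, B v w = 0) → v = 0) (k : ℕ) :
    Nat.card (IsoSub B k) *
      ∏ i ∈ Finset.range k, (Fintype.card F ^ k - Fintype.card F ^ i) =
    Nat.card (IsoTup B k) := by
  have : Finite V := Module.finite_of_finite F
  have e := (Equiv.sigmaFiberEquiv (tupSpan B (k := k))).symm
  rw [Nat.card_congr e]
  haveI := aux_finite_isoSub B k
  haveI := aux_finite_isoTup B k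
  haveI : Fintype (IsoSub B k) := Fintype.ofFinite _
  haveI : ∀ W : IsoSub B k, Fintype {t : IsoTup B k // tupSpan B t = W} :=
    fun W => Fintype.ofFinite _
  rw [Nat.card_eq_fintype_card, Nat.card_eq_fintype_card, Fintype.card_sigma]
  have hconst : ∀ W : IsoSub B k, Fintype.card {t : IsoTup B k // tupSpan B t = W} =
      ∏ i ∈ Finset.range k, (Fintype.card F ^ k - Fintype.card F ^ i) := by
    intro W
    rw [← Nat.card_eq_fintype_card, Nat.card_congr (spanFiberEquiv B W)]
    haveI : Finite W.1 := inferInstance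
    rw [card_linearIndependent (le_of_eq W.2.1.symm), W.2.1]
    rw [← Fin.prod_univ_eq_prod_range]
  rw [Finset.sum_congr rfl (fun W _ => hconst W), Finset.sum_const, Finset.card_univ,
    smul_eq_mul]

end Count

/-- In a `2ν`-dimensional non-degenerate symplectic space over `𝔽_q`, the number of
`k`-dimensional totally isotropic subspaces equals
`∏_{i=0}^{k−1} (q^{2(ν−i)} − 1)/(q^{i+1} − 1)`. -/
theorem stmt_10 (q : ℕ) (hq : ∃ p k : ℕ, p.Prime ∧ 0 < k ∧ q = p ^ k)
    (F : Type*) [Field F] [Fintype F] (hF : Fintype.card F = q)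
    (V : Type*) [AddCommGroup V] [Module F V] [FiniteDimensional F V]
    (ν : ℕ) (hdim : Module.finrank F V = 2 * ν)
    (B : V →ₗ[F] V →ₗ[F] F)
    (halt : ∀ v, B v v = 0)
    (hnd : ∀ v, (∀ w, B v w = 0) → v = 0)
    (k : ℕ) (hk : k ≤ ν) :
    (Nat.card {W : Submodule F V //
        Module.finrank F W = k ∧ ∀ w ∈ W, ∀ w' ∈ W, B w w' = 0} : ℚ) =
      ∏ i ∈ Finset.range k, ((q : ℚ) ^ (2 * (ν - i)) - 1) / ((q : ℚ) ^ (i + 1) - 1) := by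
  have hfinV : Finite V := Module.finite_of_finite F
  subst hF
  show (Nat.card (IsoSub B k) : ℚ) = _
  have hmain := aux_card_isoSub_mul B halt hnd k
  rw [aux_card_isoTup B halt hnd k, hdim] at hmain
  set q : ℕ := Fintype.card F with hq'
  have hq1 : 1 ≤ q := Fintype.card_pos
  have hq2 : (1 : ℚ) < q := by exact_mod_cast Fintype.one_lt_card
  have hc1 : ((∏ i ∈ Finset.range k, (q ^ k - q ^ i) : ℕ) : ℚ)
      = ∏ i ∈ Finset.range k, ((q : ℚ) ^ k - (q : ℚ) ^ i) := by
    rw [Nat.cast_prod]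
    refine Finset.prod_congr rfl fun i hi => ?_
    rw [Nat.cast_sub (Nat.pow_le_pow_right hq1 (Finset.mem_range.mp hi).le)]
    push_cast
    ring
  have hc2 : ((∏ i ∈ Finset.range k, (q ^ (2 * ν - i) - q ^ i) : ℕ) : ℚ)
      = ∏ i ∈ Finset.range k, ((q : ℚ) ^ (2 * ν - i) - (q : ℚ) ^ i) := by
    rw [Nat.cast_prod]
    refine Finset.prod_congr rfl fun i hi => ?_
    have hik : i ≤ 2 * ν - i := by
      have := Finset.mem_range.mp hi
      omega
    rw [Nat.cast_sub (Nat.pow_le_pow_right hq1 hik)]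
    push_cast
    ring
  have key : (Nat.card (IsoSub B k) : ℚ)
        * ∏ i ∈ Finset.range k, ((q : ℚ) ^ k - (q : ℚ) ^ i)
      = ∏ i ∈ Finset.range k, ((q : ℚ) ^ (2 * ν - i) - (q : ℚ) ^ i) := by
    rw [← hc1, ← hc2, ← Nat.cast_mul, hmain]
  have hfac1 : ∏ i ∈ Finset.range k, ((q : ℚ) ^ (2 * ν - i) - (q : ℚ) ^ i)
      = (∏ i ∈ Finset.range k, (q : ℚ) ^ i)
        * ∏ i ∈ Finset.range k, ((q : ℚ) ^ (2 * (ν - i)) - 1) := by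
    rw [← Finset.prod_mul_distrib]
    refine Finset.prod_congr rfl fun i hi => ?_
    have h1 : 2 * ν - i = i + 2 * (ν - i) := by
      have := Finset.mem_range.mp hi
      omega
    rw [h1, pow_add]
    ring
  have hfac2 : ∏ i ∈ Finset.range k, ((q : ℚ) ^ k - (q : ℚ) ^ i)
      = (∏ i ∈ Finset.range k, (q : ℚ) ^ i)
        * ∏ i ∈ Finset.range k, ((q : ℚ) ^ (i + 1) - 1) := by
    have h2 : ∏ i ∈ Finset.range k, ((q : ℚ) ^ (k - i) - 1)
        = ∏ i ∈ Finset.range k, ((q : ℚ) ^ (i + 1) - 1) := by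
      rw [← Finset.prod_range_reflect (fun j => (q : ℚ) ^ (j + 1) - 1) k]
      refine Finset.prod_congr rfl fun i hi => ?_
      have h3 : k - i = k - 1 - i + 1 := by
        have := Finset.mem_range.mp hi
        omega
      rw [h3]
    rw [← h2, ← Finset.prod_mul_distrib]
    refine Finset.prod_congr rfl fun i hi => ?_
    have h1 : k = i + (k - i) := by
      have := Finset.mem_range.mp hi
      omega
    rw [show (q : ℚ) ^ k = (q : ℚ) ^ (i + (k - i)) from by rw [← h1], pow_add]
    ring
  rw [hfac1, hfac2] at key
  have hP : (∏ i ∈ Finset.range k, (q : ℚ) ^ i) ≠ 0 := by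
    refine Finset.prod_ne_zero_iff.mpr fun i _ => ?_
    exact pow_ne_zero _ (ne_of_gt (by linarith))
  have hD : (∏ i ∈ Finset.range k, ((q : ℚ) ^ (i + 1) - 1)) ≠ 0 := by
    refine Finset.prod_ne_zero_iff.mpr fun i _ => ?_
    have h1 : (1 : ℚ) < (q : ℚ) ^ (i + 1) := one_lt_pow₀ hq2 (by omega)
    linarith
  rw [Finset.prod_div_distrib, eq_div_iff hD]
  apply mul_left_cancel₀ hP
  linear_combination key
end

section
/- The number of self-dual binary linear codes of even length n (with respect to the standard dot product on 𝔽₂^n) equals ∏_{i=1}^{n/2 − 1} (2^i + 1). -/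
open Module Submodule Finset
open LinearMap (BilinForm)

namespace SD12

variable {V : Type} [AddCommGroup V] [Module (ZMod 2) V]

def Uat (U₀ : Submodule (ZMod 2) V) {m : ℕ} (v : Fin m → V) (i : ℕ) : Submodule (ZMod 2) V :=
  U₀ ⊔ Submodule.span (ZMod 2) (v '' {j : Fin m | (j : ℕ) < i})

def Good (step : Submodule (ZMod 2) V → Set V) (U₀ : Submodule (ZMod 2) V)
    {m : ℕ} (v : Fin m → V) : Prop :=
  ∀ i : Fin m, v i ∈ step (Uat U₀ v i) \ (Uat U₀ v i : Set V)

lemma Uat_zero (U₀ : Submodule (ZMod 2) V) {m : ℕ} (v : Fin m → V) : Uat U₀ v 0 = U₀ := by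
  simp [Uat]

lemma le_Uat (U₀ : Submodule (ZMod 2) V) {m : ℕ} (v : Fin m → V) (i : ℕ) : U₀ ≤ Uat U₀ v i :=
  le_sup_left

lemma Uat_mono (U₀ : Submodule (ZMod 2) V) {m : ℕ} (v : Fin m → V) {i i' : ℕ} (h : i ≤ i') :
    Uat U₀ v i ≤ Uat U₀ v i' := by
  apply sup_le_sup_left
  apply Submodule.span_mono
  exact Set.image_mono (fun j hj => lt_of_lt_of_le hj h)

lemma Uat_init (U₀ : Submodule (ZMod 2) V) {m : ℕ} (v : Fin (m+1) → V) {i : ℕ} (hi : i ≤ m) :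
    Uat U₀ (Fin.init v) i = Uat U₀ v i := by
  unfold Uat
  congr 1
  congr 1
  ext x
  constructor
  · rintro ⟨j, hj, rfl⟩
    exact ⟨Fin.castSucc j, by simpa using hj, rfl⟩
  · rintro ⟨j, hj, rfl⟩
    have hjm : (j : ℕ) < m := lt_of_lt_of_le hj hi
    refine ⟨⟨(j : ℕ), hjm⟩, by simpa using hj, ?_⟩
    have hc : Fin.castSucc ⟨(j : ℕ), hjm⟩ = j := Fin.ext rfl
    simp [Fin.init, hc]

lemma Uat_succ (U₀ : Submodule (ZMod 2) V) {m : ℕ} (v : Fin m → V) {j : ℕ} (hj : j < m) :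
    Uat U₀ v (j+1) = Uat U₀ v j ⊔ Submodule.span (ZMod 2) {v ⟨j, hj⟩} := by
  unfold Uat
  rw [sup_assoc, ← Submodule.span_union]
  congr 2
  ext x
  constructor
  · rintro ⟨i, hi, rfl⟩
    rcases Nat.lt_succ_iff_lt_or_eq.1 hi with h | h
    · exact Or.inl ⟨i, h, rfl⟩
    · right
      have : i = ⟨j, hj⟩ := Fin.ext h
      simp [this]
  · rintro (⟨i, hi, rfl⟩ | h)
    · exact ⟨i, Nat.lt_succ_of_lt hi, rfl⟩
    · simp at h
      exact ⟨⟨j, hj⟩, Nat.lt_succ_self j, h.symm⟩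

lemma Uat_le_of_mem {U₀ : Submodule (ZMod 2) V} {m : ℕ} {v : Fin m → V}
    {C : Submodule (ZMod 2) V} (hU₀ : U₀ ≤ C) (hv : ∀ i, v i ∈ C) (i : ℕ) :
    Uat U₀ v i ≤ C := by
  apply sup_le hU₀
  rw [Submodule.span_le]
  rintro x ⟨j, _, rfl⟩
  exact hv j

lemma inv_of_good {step : Submodule (ZMod 2) V → Set V} {U₀ : Submodule (ZMod 2) V}
    {Inv : ℕ → Submodule (ZMod 2) V → Prop}
    (h0 : Inv 0 U₀)
    (hstep : ∀ j U x, Inv j U → x ∈ step U → x ∉ U →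
      Inv (j+1) (U ⊔ Submodule.span (ZMod 2) {x}))
    {m : ℕ} {v : Fin m → V} (hv : Good step U₀ v) :
    ∀ i, i ≤ m → Inv i (Uat U₀ v i) := by
  intro i
  induction i with
  | zero => intro _; rw [Uat_zero]; exact h0
  | succ j ih =>
    intro hjm
    have hj : j < m := hjm
    rw [Uat_succ U₀ v hj]
    have hg := hv ⟨j, hj⟩
    exact hstep j _ _ (ih (le_of_lt hj)) hg.1 hg.2

lemma good_init {step : Submodule (ZMod 2) V → Set V} {U₀ : Submodule (ZMod 2) V}
    {m : ℕ} {v : Fin (m+1) → V} (hv : Good step U₀ v) : Good step U₀ (Fin.init v) := by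
  intro i
  have h1 : Uat U₀ (Fin.init v) (i : ℕ) = Uat U₀ v (i : ℕ) :=
    Uat_init _ _ (le_of_lt i.is_lt)
  rw [h1]
  exact hv i.castSucc

lemma good_snoc {step : Submodule (ZMod 2) V → Set V} {U₀ : Submodule (ZMod 2) V}
    {m : ℕ} {w : Fin m → V} (hw : Good step U₀ w) {x : V}
    (hx : x ∈ step (Uat U₀ w m) \ (Uat U₀ w m : Set V)) :
    Good step U₀ (Fin.snoc w x) := by
  intro i
  induction i using Fin.lastCases with
  | last =>
    have h1 : Uat U₀ (Fin.snoc w x : Fin (m+1) → V) m = Uat U₀ w m := by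
      rw [← Uat_init U₀ (Fin.snoc w x) (le_refl m), Fin.init_snoc]
    simp only [Fin.val_last, h1, Fin.snoc_last]
    exact hx
  | cast i =>
    have h1 : Uat U₀ (Fin.snoc w x : Fin (m+1) → V) (i : ℕ) = Uat U₀ w (i : ℕ) := by
      rw [← Uat_init U₀ (Fin.snoc w x) (le_of_lt i.is_lt), Fin.init_snoc]
    simp only [Fin.coe_castSucc, h1, Fin.snoc_castSucc]
    exact hw i

lemma natCard_sigma {ι : Type*} [Fintype ι] (f : ι → Type*) [∀ i, Finite (f i)] :
    Nat.card ((i : ι) × f i) = ∑ i, Nat.card (f i) := by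
  have : ∀ i, Fintype (f i) := fun i => Fintype.ofFinite _
  simp [Nat.card_eq_fintype_card]


def fiberEquiv (step : Submodule (ZMod 2) V → Set V) (U₀ : Submodule (ZMod 2) V) {m : ℕ}
    (w : {w : Fin m → V // Good step U₀ w}) :
    {v : {v : Fin (m+1) → V // Good step U₀ v} //
        (⟨Fin.init v.1, good_init v.2⟩ : {w : Fin m → V // Good step U₀ w}) = w} ≃
      ↥(step (Uat U₀ w.1 m) \ (Uat U₀ w.1 m : Set V)) where
  toFun v := ⟨v.1.1 (Fin.last m), by
    have hini : Fin.init v.1.1 = w.1 := congrArg Subtype.val v.2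
    have h1 : Uat U₀ (v.1.1) m = Uat U₀ w.1 m := by
      rw [← Uat_init U₀ v.1.1 (le_refl m), hini]
    have h2 := v.1.2 (Fin.last m)
    simpa [Fin.val_last, h1] using h2⟩
  invFun x := ⟨⟨Fin.snoc w.1 x.1, good_snoc w.2 x.2⟩, by
    apply Subtype.ext
    simp⟩
  left_inv v := by
    apply Subtype.ext; apply Subtype.ext
    have hini : Fin.init v.1.1 = w.1 := congrArg Subtype.val v.2
    show Fin.snoc w.1 (v.1.1 (Fin.last m)) = v.1.1
    rw [← hini, Fin.snoc_init_self]
  right_inv x := by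
    apply Subtype.ext
    simp

lemma card_good [Finite V] (step : Submodule (ZMod 2) V → Set V) (U₀ : Submodule (ZMod 2) V)
    (Inv : ℕ → Submodule (ZMod 2) V → Prop) (c : ℕ → ℕ)
    (h0 : Inv 0 U₀)
    (hstep : ∀ j U x, Inv j U → x ∈ step U → x ∉ U →
      Inv (j+1) (U ⊔ Submodule.span (ZMod 2) {x}))
    (hc : ∀ j U, Inv j U → Nat.card ↥(step U \ (U : Set V)) = c j) :
    ∀ m : ℕ, Nat.card {v : Fin m → V // Good step U₀ v} = ∏ j ∈ Finset.range m, c j := by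
  intro m
  induction m with
  | zero =>
    rw [Finset.range_zero, Finset.prod_empty]
    rw [Nat.card_eq_one_iff_unique]
    refine ⟨⟨fun a b => Subtype.ext (Subsingleton.elim _ _)⟩, ⟨⟨fun i => i.elim0, fun i => i.elim0⟩⟩⟩
  | succ m ih =>
    classical
    have : Fintype {w : Fin m → V // Good step U₀ w} := Fintype.ofFinite _
    let f : {v : Fin (m+1) → V // Good step U₀ v} → {w : Fin m → V // Good step U₀ w} :=
      fun v => ⟨Fin.init v.1, good_init v.2⟩
    rw [← Nat.card_congr (Equiv.sigmaFiberEquiv f), natCard_sigma]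
    have hfib : ∀ w : {w : Fin m → V // Good step U₀ w},
        Nat.card {v // f v = w} = c m := by
      intro w
      rw [Nat.card_congr (fiberEquiv step U₀ w)]
      exact hc m _ (inv_of_good h0 hstep w.2 m le_rfl)
    rw [Finset.sum_congr rfl (fun w _ => hfib w), Finset.sum_const, smul_eq_mul,
      Finset.card_univ, ← Nat.card_eq_fintype_card, ih, Finset.prod_range_succ]


lemma nat_fact (a c : ℕ) : a*(c+1)*(c+1) - a = (a*(c+1) - a)*(c+2) := by
  have h1 : a*(c+1) - a = a*c := by
    have : a*(c+1) = a*c + a := by ring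
    omega
  rw [h1]
  have h2 : a*(c+1)*(c+1) = a*c*c + 2*(a*c) + a := by ring
  have h3 : (a*c)*(c+2) = a*c*c + 2*(a*c) := by ring
  omega

lemma card_submodule [Finite V] (U : Submodule (ZMod 2) V) :
    Nat.card U = 2 ^ finrank (ZMod 2) U := by
  have : Fintype U := Fintype.ofFinite _
  rw [Nat.card_eq_fintype_card, card_eq_pow_finrank (K := ZMod 2) (V := U)]
  norm_num

lemma card_diff_submodule [Finite V] {U W : Submodule (ZMod 2) V} (h : U ≤ W) :
    Nat.card ↥((W : Set V) \ (U : Set V)) =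
      2 ^ finrank (ZMod 2) W - 2 ^ finrank (ZMod 2) U := by
  rw [Nat.card_coe_set_eq, Set.ncard_diff h]
  have h1 : (W : Set V).ncard = Nat.card W := (Nat.card_coe_set_eq _).symm
  have h2 : (U : Set V).ncard = Nat.card U := (Nat.card_coe_set_eq _).symm
  rw [h1, h2, card_submodule, card_submodule]

lemma finrank_sup_span [FiniteDimensional (ZMod 2) V] {U : Submodule (ZMod 2) V} {x : V}
    (hx : x ∉ U) :
    finrank (ZMod 2) ↥(U ⊔ Submodule.span (ZMod 2) {x}) = finrank (ZMod 2) U + 1 := by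
  have hx0 : x ≠ 0 := fun h => hx (h ▸ U.zero_mem)
  have hdisj : U ⊓ Submodule.span (ZMod 2) {x} = ⊥ := by
    rw [eq_bot_iff]
    rintro y ⟨hyU, hyx⟩
    obtain ⟨c, rfl⟩ := Submodule.mem_span_singleton.1 hyx
    rcases eq_or_ne c 0 with hc | hc
    · simp [hc]
    · exfalso
      apply hx
      have : c⁻¹ • (c • x) ∈ U := Submodule.smul_mem _ _ hyU
      rwa [smul_smul, inv_mul_cancel₀ hc, one_smul] at this
  have := Submodule.finrank_sup_add_finrank_inf_eq U (Submodule.span (ZMod 2) {x})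
  rw [hdisj, finrank_bot, finrank_span_singleton hx0] at this
  omega

lemma orthogonal_sup (B : BilinForm (ZMod 2) V) (U W : Submodule (ZMod 2) V) :
    B.orthogonal (U ⊔ W) = B.orthogonal U ⊓ B.orthogonal W := by
  refine le_antisymm (le_inf (B.orthogonal_le le_sup_left) (B.orthogonal_le le_sup_right)) ?_
  intro y hy n hn
  obtain ⟨hy1, hy2⟩ := Submodule.mem_inf.1 hy
  obtain ⟨u, hu, w, hw, rfl⟩ := Submodule.mem_sup.1 hn
  have h1 : B u y = 0 := hy1 u hu
  have h2 : B w y = 0 := hy2 w hw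
  show B (u + w) y = 0
  rw [map_add, LinearMap.add_apply, h1, h2, add_zero]

section Main

variable [Finite V] [FiniteDimensional (ZMod 2) V]

theorem card_selfdual_general (B : BilinForm (ZMod 2) V)
    (hsymm : ∀ x y, B x y = B y x) (hnd : B.Nondegenerate)
    (U₀ : Submodule (ZMod 2) V) (hU₀ : U₀ ≤ B.orthogonal U₀)
    (hiso : ∀ x, x ∈ B.orthogonal U₀ → B x x = 0) (m : ℕ)
    (hd : finrank (ZMod 2) V = 2 * (finrank (ZMod 2) U₀ + m)) :
    Nat.card {C : Submodule (ZMod 2) V // C = B.orthogonal C ∧ U₀ ≤ C} =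
      ∏ i ∈ Finset.Icc 1 m, (2 ^ i + 1) := by
  classical
  have hrefl : B.IsRefl := fun x y h => by rw [hsymm]; exact h
  set r := finrank (ZMod 2) U₀ with hr
  set d := finrank (ZMod 2) V with hdd
  set k := r + m with hk
  -- instance : Finite (Submodule (ZMod 2) V)
  have hfinsub : Finite (Submodule (ZMod 2) V) :=
    Finite.of_injective (fun U => (U : Set V)) (fun _ _ h => SetLike.coe_injective h)
  -- Instantiation 1
  set step1 : Submodule (ZMod 2) V → Set V := fun U => (B.orthogonal U : Set V) with hstep1def
  set Inv1 : ℕ → Submodule (ZMod 2) V → Prop :=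
    fun j U => U₀ ≤ U ∧ U ≤ B.orthogonal U ∧ finrank (ZMod 2) U = r + j with hInv1def
  have h01 : Inv1 0 U₀ := ⟨le_refl _, hU₀, by omega⟩
  have hstep1 : ∀ j U x, Inv1 j U → x ∈ step1 U → x ∉ U →
      Inv1 (j+1) (U ⊔ Submodule.span (ZMod 2) {x}) := by
    rintro j U x ⟨hU₀U, hUorth, hfr⟩ hx hxn
    have hxO : x ∈ B.orthogonal U := hx
    have hxx : B x x = 0 := hiso x (B.orthogonal_le hU₀U hxO)
    refine ⟨le_trans hU₀U le_sup_left, ?_, ?_⟩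
    · rw [orthogonal_sup]
      refine sup_le (le_inf hUorth ?_) (le_inf ?_ ?_)
      · -- U ≤ orthogonal (span x)
        intro u hu n hn
        obtain ⟨c, rfl⟩ := Submodule.mem_span_singleton.1 hn
        show B (c • x) u = 0
        rw [map_smul]
        have : B u x = 0 := hxO u hu
        have hxu : B x u = 0 := by rw [hsymm]; exact this
        simp [hxu]
      · rw [Submodule.span_le, Set.singleton_subset_iff]
        exact hxO
      · rw [Submodule.span_le, Set.singleton_subset_iff]
        intro n hn
        obtain ⟨c, rfl⟩ := Submodule.mem_span_singleton.1 hn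
        show B (c • x) x = 0
        rw [map_smul]
        simp [hxx]
    · rw [finrank_sup_span hxn, hfr]
      omega
  have hc1 : ∀ j U, Inv1 j U →
      Nat.card ↥(step1 U \ (U : Set V)) = 2 ^ (d - (r + j)) - 2 ^ (r + j) := by
    rintro j U ⟨hU₀U, hUorth, hfr⟩
    rw [hstep1def]
    rw [card_diff_submodule hUorth]
    rw [LinearMap.BilinForm.finrank_orthogonal hnd, hfr]
  -- count of Good1 tuples
  have hA := card_good step1 U₀ Inv1 (fun j => 2 ^ (d - (r + j)) - 2 ^ (r + j))
    h01 hstep1 hc1 m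
  -- the map to self-dual codes
  have hinv1 : ∀ (v : {v : Fin m → V // Good step1 U₀ v}), Inv1 m (Uat U₀ v.1 m) :=
    fun v => inv_of_good h01 hstep1 v.2 m le_rfl
  have hself : ∀ (v : {v : Fin m → V // Good step1 U₀ v}),
      Uat U₀ v.1 m = B.orthogonal (Uat U₀ v.1 m) ∧ U₀ ≤ Uat U₀ v.1 m := by
    intro v
    obtain ⟨h1, h2, h3⟩ := hinv1 v
    refine ⟨Submodule.eq_of_le_of_finrank_le h2 ?_, h1⟩
    rw [LinearMap.BilinForm.finrank_orthogonal hnd, h3]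
    omega
  let g : {v : Fin m → V // Good step1 U₀ v} →
      {C : Submodule (ZMod 2) V // C = B.orthogonal C ∧ U₀ ≤ C} :=
    fun v => ⟨Uat U₀ v.1 m, hself v⟩
  have : Fintype {C : Submodule (ZMod 2) V // C = B.orthogonal C ∧ U₀ ≤ C} :=
    Fintype.ofFinite _
  have hsplit : Nat.card {v : Fin m → V // Good step1 U₀ v} =
      ∑ C : {C : Submodule (ZMod 2) V // C = B.orthogonal C ∧ U₀ ≤ C},
        Nat.card {v // g v = C} := by
    rw [← natCard_sigma]
    exact (Nat.card_congr (Equiv.sigmaFiberEquiv g)).symm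
  -- each fiber has card ∏ (2^k - 2^(r+j))
  have hfiber : ∀ C : {C : Submodule (ZMod 2) V // C = B.orthogonal C ∧ U₀ ≤ C},
      Nat.card {v // g v = C} = ∏ j ∈ Finset.range m, (2 ^ k - 2 ^ (r + j)) := by
    rintro ⟨C, hC, hU₀C⟩
    have hfrC : finrank (ZMod 2) C = k := by
      have h1 : finrank (ZMod 2) (B.orthogonal C) = d - finrank (ZMod 2) C :=
        LinearMap.BilinForm.finrank_orthogonal hnd C
      have h2 : finrank (ZMod 2) C ≤ d := Submodule.finrank_le C
      rw [← hC] at h1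
      omega
    -- instantiation 2
    set step2 : Submodule (ZMod 2) V → Set V := fun _ => (C : Set V) with hstep2def
    set Inv2 : ℕ → Submodule (ZMod 2) V → Prop :=
      fun j U => U ≤ C ∧ finrank (ZMod 2) U = r + j with hInv2def
    have h02 : Inv2 0 U₀ := ⟨hU₀C, by omega⟩
    have hstep2 : ∀ j U x, Inv2 j U → x ∈ step2 U → x ∉ U →
        Inv2 (j+1) (U ⊔ Submodule.span (ZMod 2) {x}) := by
      rintro j U x ⟨hUC, hfr⟩ hx hxn
      refine ⟨sup_le hUC ?_, ?_⟩
      · rw [Submodule.span_le, Set.singleton_subset_iff]; exact hx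
      · rw [finrank_sup_span hxn, hfr]
        omega
    have hc2 : ∀ j U, Inv2 j U →
        Nat.card ↥(step2 U \ (U : Set V)) = 2 ^ k - 2 ^ (r + j) := by
      rintro j U ⟨hUC, hfr⟩
      rw [hstep2def]
      rw [card_diff_submodule hUC, hfrC, hfr]
    have hB := card_good step2 U₀ Inv2 (fun j => 2 ^ k - 2 ^ (r + j)) h02 hstep2 hc2 m
    rw [← hB]
    apply Nat.card_congr
    refine ⟨fun v => ⟨v.1.1, ?_⟩, fun v => ⟨⟨v.1, ?_⟩, ?_⟩, ?_, ?_⟩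
    · -- Good2
      intro i
      have hCval : Uat U₀ v.1.1 m = C := congrArg Subtype.val v.2
      have hle1 : Uat U₀ v.1.1 ((i : ℕ) + 1) ≤ C :=
        le_trans (Uat_mono U₀ v.1.1 i.is_lt) (le_of_eq hCval)
      have hmem : v.1.1 i ∈ Uat U₀ v.1.1 ((i : ℕ) + 1) := by
        rw [Uat_succ U₀ v.1.1 i.is_lt]
        apply Submodule.mem_sup_right
        apply Submodule.subset_span
        simp
      exact ⟨hle1 hmem, (v.1.2 i).2⟩
    · -- Good1
      intro i
      have hUC : Uat U₀ v.1 (i : ℕ) ≤ C := Uat_le_of_mem hU₀C (fun i' => (v.2 i').1) _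
      have h1 : v.1 i ∈ B.orthogonal (Uat U₀ v.1 (i : ℕ)) := by
        apply B.orthogonal_le hUC
        rw [← hC]
        exact (v.2 i).1
      exact ⟨h1, (v.2 i).2⟩
    · -- g value is C
      apply Subtype.ext
      show Uat U₀ v.1 m = C
      have hle : Uat U₀ v.1 m ≤ C := Uat_le_of_mem hU₀C (fun i' => (v.2 i').1) _
      have hinv2 : Inv2 m (Uat U₀ v.1 m) := by
        refine inv_of_good h02 hstep2 ?_ m le_rfl
        intro i
        have h1 : Uat U₀ v.1 (i : ℕ) ≤ C := Uat_le_of_mem hU₀C (fun i' => (v.2 i').1) _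
        exact ⟨(v.2 i).1, (v.2 i).2⟩
      exact Submodule.eq_of_le_of_finrank_eq hle (by rw [hinv2.2, hfrC])
    · intro v; apply Subtype.ext; apply Subtype.ext; rfl
    · intro v; apply Subtype.ext; rfl
  -- put it together
  rw [hsplit] at hA
  rw [Finset.sum_congr rfl (fun C _ => hfiber C), Finset.sum_const, smul_eq_mul] at hA
  -- arithmetic
  have hfact : ∀ j ∈ Finset.range m, 2 ^ (d - (r + j)) - 2 ^ (r + j) =
      (2 ^ k - 2 ^ (r + j)) * (2 ^ (m - j) + 1) := by
    intro j hj
    rw [Finset.mem_range] at hj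
    have ht : 1 ≤ m - j := by omega
    set t := m - j with htdef
    obtain ⟨c, hc⟩ : ∃ c, t = c + 1 := ⟨t - 1, by omega⟩
    have hd1 : d - (r + j) = (r + j) + 2 * t := by omega
    have hk1 : k = (r + j) + t := by omega
    rw [hd1, hk1, hc]
    have e1 : 2 ^ (r + j + 2 * (c+1)) = 2 ^ (r+j) * (2^(c+1)) * (2^(c+1)) := by
      rw [← pow_add, ← pow_add]; ring_nf
    have e2 : 2 ^ (r + j + (c+1)) = 2 ^ (r+j) * (2^(c+1)) := by rw [← pow_add]
    rw [e1, e2]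
    have := nat_fact (2 ^ (r+j)) (2^(c+1) - 1)
    have h2c : 2^(c+1) - 1 + 1 = 2^(c+1) := by
      have : 0 < 2^(c+1) := by positivity
      omega
    rw [h2c] at this
    rw [this]
    congr 1
    omega
  rw [Finset.prod_congr rfl hfact, Finset.prod_mul_distrib] at hA
  -- reindex second product
  have hre : ∏ j ∈ Finset.range m, (2 ^ (m - j) + 1) = ∏ i ∈ Finset.Icc 1 m, (2 ^ i + 1) := by
    apply Finset.prod_bij' (fun j _ => m - j) (fun i _ => m - i)
    · intro j hj
      rw [Finset.mem_range] at hj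
      rw [Finset.mem_Icc]
      omega
    · intro i hi
      rw [Finset.mem_Icc] at hi
      rw [Finset.mem_range]
      omega
    · intro j hj
      rw [Finset.mem_range] at hj
      omega
    · intro i hi
      rw [Finset.mem_Icc] at hi
      omega
    · intro j hj
      rfl
  rw [hre] at hA
  -- cancel
  have hFpos : 0 < ∏ j ∈ Finset.range m, (2 ^ k - 2 ^ (r + j)) := by
    apply Finset.prod_pos
    intro j hj
    rw [Finset.mem_range] at hj
    have : 2 ^ (r + j) < 2 ^ k := Nat.pow_lt_pow_right (by norm_num) (by omega)
    omega
  have hcard : Nat.card {C : Submodule (ZMod 2) V // C = B.orthogonal C ∧ U₀ ≤ C} =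
      Fintype.card {C : Submodule (ZMod 2) V // C = B.orthogonal C ∧ U₀ ≤ C} :=
    Nat.card_eq_fintype_card
  rw [Finset.card_univ] at hA
  apply Nat.eq_of_mul_eq_mul_left hFpos
  rw [hcard]
  calc (∏ j ∈ Finset.range m, (2 ^ k - 2 ^ (r + j))) *
        Fintype.card {C : Submodule (ZMod 2) V // C = B.orthogonal C ∧ U₀ ≤ C}
      = Fintype.card {C : Submodule (ZMod 2) V // C = B.orthogonal C ∧ U₀ ≤ C} *
        ∏ j ∈ Finset.range m, (2 ^ k - 2 ^ (r + j)) := by ring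
    _ = (∏ j ∈ Finset.range m, (2 ^ k - 2 ^ (r + j))) * ∏ i ∈ Finset.Icc 1 m, (2 ^ i + 1) := by
        rw [← hA]
    _ = (∏ j ∈ Finset.range m, (2 ^ k - 2 ^ (r + j))) * ∏ i ∈ Finset.Icc 1 m, (2 ^ i + 1) := rfl

end Main

end SD12

open SD12 Module

/-- The number of self-dual binary linear codes of even length `n` equals
`∏_{i=1}^{n/2−1} (2^i + 1)`. -/
theorem stmt_12 (n : ℕ) (hn : Even n) :
    Nat.card {C : Submodule (ZMod 2) (Fin n → ZMod 2) //
        (C : Set (Fin n → ZMod 2)) = {y | ∀ x ∈ C, ∑ i, x i * y i = 0}} =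
      ∏ i ∈ Finset.Icc 1 (n / 2 - 1), (2 ^ i + 1) := by
  classical
  rcases Nat.eq_zero_or_pos n with hn0 | hnpos
  · subst hn0
    have hprop : ∀ C : Submodule (ZMod 2) (Fin 0 → ZMod 2),
        (C : Set (Fin 0 → ZMod 2)) = {y | ∀ x ∈ C, ∑ i, x i * y i = 0} := by
      intro C
      have hC : C = ⊤ := Subsingleton.elim C ⊤
      ext y
      simp [hC]
    have h1 : Nat.card {C : Submodule (ZMod 2) (Fin 0 → ZMod 2) //
        (C : Set (Fin 0 → ZMod 2)) = {y | ∀ x ∈ C, ∑ i, x i * y i = 0}} = 1 := by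
      rw [Nat.card_eq_one_iff_unique]
      exact ⟨⟨fun a b => Subtype.ext (Subsingleton.elim _ _)⟩, ⟨⟨⊤, hprop ⊤⟩⟩⟩
    rw [h1]
    simp
  · have h2n : 2 ∣ n := hn.two_dvd
    set B : LinearMap.BilinForm (ZMod 2) (Fin n → ZMod 2) :=
      LinearMap.mk₂ (ZMod 2) (fun x y => ∑ i, x i * y i)
        (fun x x' y => by simp [Pi.add_apply, add_mul, Finset.sum_add_distrib])
        (fun c x y => by simp [Pi.smul_apply, smul_eq_mul, Finset.mul_sum, mul_assoc])
        (fun x y y' => by simp [Pi.add_apply, mul_add, Finset.sum_add_distrib])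
        (fun c x y => by simp [Pi.smul_apply, smul_eq_mul, Finset.mul_sum, mul_left_comm])
      with hB
    have hBapply : ∀ x y : Fin n → ZMod 2, B x y = ∑ i, x i * y i := fun _ _ => rfl
    have hsymm : ∀ x y : Fin n → ZMod 2, B x y = B y x := by
      intro x y; simp only [hBapply, mul_comm]
    have hnd : B.Nondegenerate := by
      refine (LinearMap.IsRefl.nondegenerate_iff_separatingLeft (fun x y h => by rw [hsymm]; exact h)).2 ?_
      intro x hx
      funext i
      have h1 := hx (Pi.single i 1)
      rw [hBapply] at h1
      have hsum : ∑ j, x j * (Pi.single i 1 : Fin n → ZMod 2) j = x i := by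
        simp [Pi.single_apply]
      rw [hsum] at h1
      simpa using h1
    set one : Fin n → ZMod 2 := (fun _ => 1) with hone
    have h1ne : one ≠ 0 := by
      intro h
      have := congr_fun h ⟨0, hnpos⟩
      simp [hone] at this
    have hmulself : ∀ a : ZMod 2, a * a = a := by decide
    have hquad : ∀ x : Fin n → ZMod 2, B x x = B x one := by
      intro x
      simp only [hBapply, hone, hmulself, mul_one]
    have hB11 : B one one = 0 := by
      rw [hBapply]
      simp only [hone, mul_one]
      rw [Finset.sum_const, Finset.card_univ, Fintype.card_fin]
      rw [nsmul_eq_mul, mul_one]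
      exact (ZMod.natCast_eq_zero_iff n 2).2 h2n
    set U₀ : Submodule (ZMod 2) (Fin n → ZMod 2) := Submodule.span (ZMod 2) {one} with hU₀def
    have hU₀ : U₀ ≤ B.orthogonal U₀ := by
      rw [hU₀def, Submodule.span_le, Set.singleton_subset_iff]
      intro t ht
      obtain ⟨c, rfl⟩ := Submodule.mem_span_singleton.1 ht
      show B (c • one) one = 0
      rw [map_smul]
      simp [hB11]
    have hiso : ∀ x, x ∈ B.orthogonal U₀ → B x x = 0 := by
      intro x hx
      have h1 : B one x = 0 := hx one (Submodule.mem_span_singleton_self one)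
      rw [hquad x, hsymm]
      exact h1
    have hrU₀ : finrank (ZMod 2) U₀ = 1 := finrank_span_singleton h1ne
    have hdim : finrank (ZMod 2) (Fin n → ZMod 2) = n := by
      rw [Module.finrank_pi, Fintype.card_fin]
    have hn2 : n % 2 = 0 := Nat.even_iff.1 hn
    have hdok : finrank (ZMod 2) (Fin n → ZMod 2) =
        2 * (finrank (ZMod 2) U₀ + (n / 2 - 1)) := by
      rw [hdim, hrU₀]
      omega
    have hmain := card_selfdual_general B hsymm hnd U₀ hU₀ hiso (n / 2 - 1) hdok
    rw [← hmain]
    apply Nat.card_congr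
    apply Equiv.subtypeEquivRight
    intro C
    constructor
    · intro h
      have hCeq : C = B.orthogonal C := by
        apply SetLike.ext
        intro y
        constructor
        · intro hy
          have hy' : y ∈ (C : Set (Fin n → ZMod 2)) := hy
          rw [h] at hy'
          intro t ht
          exact hy' t ht
        · intro hy
          have hy' : y ∈ {y : Fin n → ZMod 2 | ∀ x ∈ C, ∑ i, x i * y i = 0} :=
            fun t ht => hy t ht
          rw [← h] at hy'
          exact hy'
      refine ⟨hCeq, ?_⟩
      rw [hU₀def, Submodule.span_le, Set.singleton_subset_iff]
      have hmem : one ∈ B.orthogonal C := by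
        intro t ht
        have ht' : t ∈ B.orthogonal C := by rw [← hCeq]; exact ht
        have htt : B t t = 0 := ht' t ht
        show B t one = 0
        rw [← hquad]
        exact htt
      rw [hCeq]
      exact hmem
    · rintro ⟨hCeq, _⟩
      ext y
      constructor
      · intro hy
        intro t ht
        have hy' : y ∈ B.orthogonal C := by rw [← hCeq]; exact hy
        exact hy' t ht
      · intro hy
        rw [hCeq]
        exact fun t ht => hy t ht
end
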